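/- Let (Ω, μ) be a measure space, 2 ≤ p < ∞, M, N ⊆ L^p(Ω, μ) subsets, A : M → L^p(Ω, μ) and B : N → L^p(Ω, μ) arbitrary maps, f ∈ M ∩ N, and a, b ∈ ℂ. Then for every bounded linear functional φ on L^p(Ω, μ) with ‖φ‖ ≤ 1 and φ(f) = 0, one has ‖Af − a·f‖_p^p + ‖Bf − b·f‖_p^p ≥ (1/2^{p−1}) (|φ((A+B)f)|^p + |φ((A−B)f)|^p), where (A+B)f := Af + Bf and (A−B)f := Af − Bf. -/

import Mathlib

open MeasureTheory Real NNReal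

private lemma clarkson_scalar_nn {p : ℝ} (hp : 2 ≤ p) (α β : ℂ) :
    ‖α + β‖₊ ^ p + ‖α - β‖₊ ^ p ≤ 2 ^ (p - 1) * (‖α‖₊ ^ p + ‖β‖₊ ^ p) := by
  have h2 : (1 : ℝ) ≤ p / 2 := by linarith
  have hpow : ∀ x : ℝ≥0, (x * x) ^ (p / 2) = x ^ p := by
    intro x
    have hx : x * x = x ^ ((2 : ℕ) : ℝ) := by
      rw [NNReal.rpow_natCast]; ring
    rw [hx, ← NNReal.rpow_mul]
    congr 1
    push_cast
    ring
  have par : ‖α + β‖₊ * ‖α + β‖₊ + ‖α - β‖₊ * ‖α - β‖₊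
      = 2 * (‖α‖₊ * ‖α‖₊ + ‖β‖₊ * ‖β‖₊) := by simpa only [sq] using parallelogram_law_with_nnnorm ℂ α β
  calc ‖α + β‖₊ ^ p + ‖α - β‖₊ ^ p
      = (‖α + β‖₊ * ‖α + β‖₊) ^ (p / 2) + (‖α - β‖₊ * ‖α - β‖₊) ^ (p / 2) := by
        rw [hpow, hpow]
    _ ≤ (‖α + β‖₊ * ‖α + β‖₊ + ‖α - β‖₊ * ‖α - β‖₊) ^ (p / 2) :=
        NNReal.add_rpow_le_rpow_add _ _ h2
    _ = (2 : ℝ≥0) ^ (p / 2) * (‖α‖₊ * ‖α‖₊ + ‖β‖₊ * ‖β‖₊) ^ (p / 2) := by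
        rw [par, NNReal.mul_rpow]
    _ ≤ (2 : ℝ≥0) ^ (p / 2) * ((2 : ℝ≥0) ^ (p / 2 - 1) *
          ((‖α‖₊ * ‖α‖₊) ^ (p / 2) + (‖β‖₊ * ‖β‖₊) ^ (p / 2))) :=
        mul_le_mul_right (NNReal.rpow_add_le_mul_rpow_add_rpow _ _ h2) _
    _ = 2 ^ (p - 1) * (‖α‖₊ ^ p + ‖β‖₊ ^ p) := by
        rw [hpow, hpow, ← mul_assoc, ← NNReal.rpow_add two_ne_zero]
        ring_nf

private lemma clarkson_scalar {p : ℝ} (hp : 2 ≤ p) (α β : ℂ) :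
    ‖α + β‖ ^ p + ‖α - β‖ ^ p ≤ 2 ^ (p - 1) * (‖α‖ ^ p + ‖β‖ ^ p) := by
  have h := clarkson_scalar_nn hp α β
  have := (NNReal.coe_le_coe).2 h
  push_cast [NNReal.coe_rpow] at this
  simpa [coe_nnnorm] using this

theorem nonlinear_maccone_pati_clarkson_ge_two
    {Ω : Type*} [MeasurableSpace Ω] (μ : Measure Ω) (p : ℝ) (hp : 2 ≤ p) [Fact (1 ≤ ENNReal.ofReal p)]
    (M N : Set (Lp ℂ (ENNReal.ofReal p) μ))
    (A : M → Lp ℂ (ENNReal.ofReal p) μ) (B : N → Lp ℂ (ENNReal.ofReal p) μ)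
    (f : Lp ℂ (ENNReal.ofReal p) μ) (hfM : f ∈ M) (hfN : f ∈ N) (a b : ℂ)
    (φ : Lp ℂ (ENNReal.ofReal p) μ →L[ℂ] ℂ) (hφ : ‖φ‖ ≤ 1) (hφf : φ f = 0) :
    ‖A ⟨f, hfM⟩ - a • f‖ ^ p + ‖B ⟨f, hfN⟩ - b • f‖ ^ p ≥
      (1 / 2 ^ (p - 1)) *
        (‖φ (A ⟨f, hfM⟩ + B ⟨f, hfN⟩)‖ ^ p + ‖φ (A ⟨f, hfM⟩ - B ⟨f, hfN⟩)‖ ^ p) := by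
  set u := A ⟨f, hfM⟩ - a • f with hu
  set v := B ⟨f, hfN⟩ - b • f with hv
  have hpos : (0 : ℝ) < 2 ^ (p - 1) := Real.rpow_pos_of_pos (by norm_num) _
  have h1 : φ (A ⟨f, hfM⟩ + B ⟨f, hfN⟩) = φ u + φ v := by
    simp [hu, hv, map_sub, map_add, _root_.map_smul, hφf]
  have h2 : φ (A ⟨f, hfM⟩ - B ⟨f, hfN⟩) = φ u - φ v := by
    simp [hu, hv, map_sub, map_add, _root_.map_smul, hφf]
  have hbu : ‖φ u‖ ≤ ‖u‖ := by
    have := φ.le_opNorm u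
    nlinarith [norm_nonneg u]
  have hbv : ‖φ v‖ ≤ ‖v‖ := by
    have := φ.le_opNorm v
    nlinarith [norm_nonneg v]
  rw [ge_iff_le, one_div, inv_mul_le_iff₀ hpos, h1, h2]
  calc ‖φ u + φ v‖ ^ p + ‖φ u - φ v‖ ^ p
      ≤ 2 ^ (p - 1) * (‖φ u‖ ^ p + ‖φ v‖ ^ p) := clarkson_scalar hp _ _
    _ ≤ 2 ^ (p - 1) * (‖u‖ ^ p + ‖v‖ ^ p) := by
        apply mul_le_mul_of_nonneg_left _ hpos.le
        gcongr
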